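/- Let S be a D-graded ring, f, g ∈ S homogeneous relevant elements. Suppose the interiors of the weight cones C_D(f) and C_D(g) intersect, i.e. there exist k, l ≥ 1 and homogeneous h₁ ∣ f^k, h₂ ∣ g^l with deg(h₁) = deg(h₂) lying in the interior of both cones. Then there exists a homogeneous element of degree zero in the localization S_{fg} of the form h₁/h₂ that maps units to units; in particular, in the polynomial case S = k[T_1,…,T_n] with squarefree monomials f = ∏_{i∈I} T_i and g = ∏_{j∈J} T_j, an interior intersection point yields positive integers ε_i (i ∈ I), δ_j (j ∈ J) with Σ_{i∈I} ε_i deg(T_i) = Σ_{j∈J} δ_j deg(T_j). -/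

import Mathlib

open scoped TensorProduct
open MvPolynomial

/-- The canonical map `D → D_ℝ = ℝ ⊗[ℤ] D`. -/
noncomputable def toReal (D : Type*) [AddCommGroup D] (d : D) : ℝ ⊗[ℤ] D :=
  (1 : ℝ) ⊗ₜ[ℤ] d

noncomputable def pairing {D : Type*} [AddCommGroup D] (φ : D →ₗ[ℤ] ℤ) :
    ℝ ⊗[ℤ] D →ₗ[ℤ] ℝ :=
  TensorProduct.lift
  { toFun := fun a => a • ((Int.castAddHom ℝ).toIntLinearMap.comp φ)
    map_add' := fun a b => add_smul a b _
    map_smul' := fun n a => smul_assoc n a _ }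

@[simp] lemma pairing_tmul {D : Type*} [AddCommGroup D] (φ : D →ₗ[ℤ] ℤ) (a : ℝ) (x : D) :
    pairing φ (a ⊗ₜ[ℤ] x) = a * (φ x : ℝ) := by
  unfold pairing
  erw [TensorProduct.lift.tmul]
  simp [mul_comm]


lemma exists_coords (D : Type*) [AddCommGroup D] [AddGroup.FG D] :
    ∃ (r : ℕ) (φ : Fin r → (D →ₗ[ℤ] ℤ)),
      ∀ x : D, (∀ m, φ m x = 0) → ∃ t : ℕ, 0 < t ∧ t • x = 0 := by
  have hfin : Module.Finite ℤ D := Module.Finite.iff_addGroup_fg.mpr ‹_›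
  set T := Submodule.torsion ℤ D
  let b := Module.Free.chooseBasis ℤ (D ⧸ T)
  let ι := Module.Free.ChooseBasisIndex ℤ (D ⧸ T)
  let e : ι ≃ Fin (Fintype.card ι) := Fintype.equivFin ι
  refine ⟨Fintype.card ι, fun m => (b.coord (e.symm m)).comp T.mkQ, fun x hx => ?_⟩
  have hq : T.mkQ x = 0 := by
    have h0 : ∀ idx : ι, b.coord idx (T.mkQ x) = 0 := by
      intro idx
      simpa using hx (e idx)
    exact b.forall_coord_eq_zero_iff.mp h0
  have hxt : x ∈ T := by rwa [Submodule.mkQ_apply, Submodule.Quotient.mk_eq_zero] at hq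
  obtain ⟨a, ha⟩ : ∃ a : nonZeroDivisors ℤ, (a : ℤ) • x = 0 := hxt
  have hane : (a : ℤ) ≠ 0 := nonZeroDivisors.coe_ne_zero a
  refine ⟨(a : ℤ).natAbs, Int.natAbs_pos.mpr hane, ?_⟩
  have h2 : ((a : ℤ).natAbs : ℤ) • x = 0 := by
    rcases Int.natAbs_eq (a : ℤ) with h | h
    · rw [← h]; exact ha
    · have : (-(a:ℤ)) • x = 0 := by rw [neg_smul, ha, neg_zero]
      rw [show ((a:ℤ).natAbs : ℤ) = -(a:ℤ) by omega]
      exact this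
  rw [natCast_zsmul] at h2
  exact h2

lemma ratApprox {ι : Type*} [DecidableEq ι] (r : ℕ) :
    ∀ (s : Finset ι) (A : Fin r → ι → ℚ) (β : Fin r → ℚ) (c : ι → ℝ),
      (∀ m, ∑ i ∈ s, (A m i : ℝ) * c i = (β m : ℝ)) →
      ∀ ε : ℝ, 0 < ε →
      ∃ q : ι → ℚ, (∀ m, ∑ i ∈ s, A m i * q i = β m) ∧ ∀ i ∈ s, |(q i : ℝ) - c i| < ε := by
  induction r with
  | zero =>
    intro s A β c _ ε hε
    choose q hq1 hq2 using fun i => exists_rat_btwn (show c i - ε < c i + ε by linarith)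
    refine ⟨q, fun m => m.elim0, fun i _ => ?_⟩
    have h1 := hq1 i; have h2 := hq2 i
    rw [abs_sub_lt_iff]
    constructor <;> linarith
  | succ r ih =>
    intro s A β c hc ε hε
    by_cases h0 : ∀ i ∈ s, A 0 i = 0
    · have hb : β 0 = 0 := by
        have h := hc 0
        rw [Finset.sum_eq_zero (fun i hi => by rw [h0 i hi]; norm_num)] at h
        exact_mod_cast h.symm
      obtain ⟨q, hq, happ⟩ :=
        ih s (fun m => A m.succ) (fun m => β m.succ) c (fun m => hc m.succ) ε hε
      refine ⟨q, fun m => ?_, happ⟩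
      refine Fin.cases ?_ (fun m' => hq m') m
      rw [Finset.sum_eq_zero fun i hi => by rw [h0 i hi, zero_mul], hb]
    · push_neg at h0
      obtain ⟨i0, hi0s, hi0⟩ := h0
      set a : ι → ℚ := A 0 with ha_def
      have ha0 : (a i0 : ℝ) ≠ 0 := by exact_mod_cast hi0
      set s' := s.erase i0 with hs'
      set A' : Fin r → ι → ℚ := fun m i => A m.succ i - A m.succ i0 * (a i / a i0) with hA'
      set β' : Fin r → ℚ := fun m => β m.succ - A m.succ i0 * (β 0 / a i0) with hβ'
      have hsplit : ∀ f : ι → ℝ, ∑ i ∈ s, f i = f i0 + ∑ i ∈ s', f i :=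
        fun f => (Finset.add_sum_erase s f hi0s).symm
      have e1 : ∑ i ∈ s', (a i : ℝ) * c i = (β 0 : ℝ) - (a i0 : ℝ) * c i0 := by
        have h := hc 0
        rw [hsplit] at h
        linarith
      have hc' : ∀ m, ∑ i ∈ s', (A' m i : ℝ) * c i = (β' m : ℝ) := by
        intro m
        have e2 : ∑ i ∈ s', (A m.succ i : ℝ) * c i
            = (β m.succ : ℝ) - (A m.succ i0 : ℝ) * c i0 := by
          have h := hc m.succ
          rw [hsplit] at h
          linarith
        have expand : ∀ i ∈ s', ((A' m i : ℚ) : ℝ) * c i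
            = (A m.succ i : ℝ) * c i
              - ((A m.succ i0 : ℝ) / (a i0 : ℝ)) * ((a i : ℝ) * c i) := by
          intro i _
          rw [hA']
          push_cast
          field_simp
        rw [Finset.sum_congr rfl expand, Finset.sum_sub_distrib, ← Finset.mul_sum, e1, e2, hβ']
        push_cast
        field_simp
        ring
      -- choose ε'
      set Sa : ℝ := ∑ i ∈ s', |(a i : ℝ)| with hSa
      have hSa0 : 0 ≤ Sa := Finset.sum_nonneg fun i _ => abs_nonneg _
      set ε' : ℝ := min ε (ε * |(a i0 : ℝ)| / (1 + Sa)) with hε'def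
      have hε' : 0 < ε' := by
        apply lt_min hε
        apply div_pos (mul_pos hε (abs_pos.mpr ha0))
        linarith
      obtain ⟨q', hq', happ'⟩ := ih s' A' β' c hc' ε' hε'
      set T : ℚ := ∑ i ∈ s', a i * q' i with hT
      set q : ι → ℚ := Function.update q' i0 ((β 0 - T) / a i0) with hqdef
      have hqi0 : q i0 = (β 0 - T) / a i0 := Function.update_self _ _ _
      have hqother : ∀ i ∈ s', q i = q' i := fun i hi =>
        Function.update_of_ne (Finset.ne_of_mem_erase hi) _ _
      have hsplitQ : ∀ f : ι → ℚ, ∑ i ∈ s, f i = f i0 + ∑ i ∈ s', f i :=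
        fun f => (Finset.add_sum_erase s f hi0s).symm
      refine ⟨q, ?_, ?_⟩
      · intro m
        refine Fin.cases ?_ ?_ m
        · rw [hsplitQ, Finset.sum_congr rfl (fun i hi => by rw [hqother i hi]), hqi0, ← ha_def,
            ← hT]
          field_simp
          ring
        · intro m'
          have key := hq' m'
          rw [hsplitQ, Finset.sum_congr rfl (fun i hi => by rw [hqother i hi]), hqi0]
          have expand : ∀ i ∈ s', A m'.succ i * q' i
              = A' m' i * q' i + (A m'.succ i0 / a i0) * (a i * q' i) := by
            intro i _
            rw [hA']
            field_simp
            ring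
          rw [Finset.sum_congr rfl expand, Finset.sum_add_distrib, key, ← Finset.mul_sum, ← hT,
            hβ']
          field_simp
          ring
      · intro i his
        by_cases hii : i = i0
        · subst hii
          have hval : (q i : ℝ) - c i = (∑ j ∈ s', (a j : ℝ) * (c j - (q' j : ℝ))) / (a i : ℝ) := by
            rw [hqi0]
            push_cast [hT]
            have hsum : ∑ j ∈ s', (a j : ℝ) * (c j - (q' j : ℝ))
                = (∑ j ∈ s', (a j : ℝ) * c j) - ∑ j ∈ s', (a j : ℝ) * (q' j : ℝ) := by
              rw [← Finset.sum_sub_distrib]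
              exact Finset.sum_congr rfl fun j _ => by ring
            rw [hsum, e1]
            field_simp
            ring
          have ha' : 0 < |(a i : ℝ)| := abs_pos.mpr ha0
          have h1 : |∑ j ∈ s', (a j : ℝ) * (c j - (q' j : ℝ))| ≤ Sa * ε' := by
            calc |∑ j ∈ s', (a j : ℝ) * (c j - (q' j : ℝ))|
                ≤ ∑ j ∈ s', |(a j : ℝ) * (c j - (q' j : ℝ))| := Finset.abs_sum_le_sum_abs _ _
              _ ≤ ∑ j ∈ s', |(a j : ℝ)| * ε' := by
                  refine Finset.sum_le_sum fun j hj => ?_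
                  rw [abs_mul]
                  refine mul_le_mul_of_nonneg_left ?_ (abs_nonneg _)
                  rw [abs_sub_comm]
                  exact (happ' j hj).le
              _ = Sa * ε' := by rw [hSa, Finset.sum_mul]
          have hlt : Sa * ε' / |(a i : ℝ)| < ε := by
            rw [div_lt_iff₀ ha']
            have h2 : ε' ≤ ε * |(a i : ℝ)| / (1 + Sa) := min_le_right _ _
            have hX : 0 < ε * |(a i : ℝ)| := mul_pos hε ha'
            calc Sa * ε' ≤ Sa * (ε * |(a i : ℝ)| / (1 + Sa)) :=
                  mul_le_mul_of_nonneg_left h2 hSa0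
              _ = ε * |(a i : ℝ)| * (Sa / (1 + Sa)) := by ring
              _ < ε * |(a i : ℝ)| * 1 := by
                  refine mul_lt_mul_of_pos_left ?_ hX
                  rw [div_lt_one (by linarith)]
                  linarith
              _ = ε * |(a i : ℝ)| := mul_one _
          calc |(q i : ℝ) - c i| = |∑ j ∈ s', (a j : ℝ) * (c j - (q' j : ℝ))| / |(a i : ℝ)| := by
                rw [hval, abs_div]
            _ ≤ Sa * ε' / |(a i : ℝ)| := by
                exact div_le_div_of_nonneg_right h1 ha'.le
            _ < ε := hlt
        · have hi' : i ∈ s' := Finset.mem_erase.mpr ⟨hii, his⟩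
          rw [hqother i hi']
          exact lt_of_lt_of_le (happ' i hi') (min_le_left _ _)
lemma one_side {D : Type*} [AddCommGroup D] [AddGroup.FG D] {n : ℕ} (w : Fin n → D)
    (I : Finset (Fin n)) (d : D)
    (hint : ∃ c : Fin n → ℝ, (∀ i ∈ I, 0 < c i) ∧
      toReal D d = ∑ i ∈ I, c i • toReal D (w i)) :
    ∃ (N : ℕ) (p : Fin n → ℕ), 0 < N ∧ (∀ i ∈ I, 1 ≤ p i) ∧
      ∑ i ∈ I, p i • w i = N • d := by
  obtain ⟨r, φ, hφ⟩ := exists_coords D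
  obtain ⟨c, hcpos, hceq⟩ := hint
  have hceq' : (1 : ℝ) ⊗ₜ[ℤ] d = ∑ i ∈ I, (c i) ⊗ₜ[ℤ] (w i) := by
    rw [show ((1 : ℝ) ⊗ₜ[ℤ] d) = toReal D d from rfl, hceq]
    refine Finset.sum_congr rfl fun i _ => ?_
    rw [toReal, TensorProduct.smul_tmul', smul_eq_mul, mul_one]
  have hreal : ∀ m, ((φ m d : ℤ) : ℝ) = ∑ i ∈ I, c i * ((φ m (w i) : ℤ) : ℝ) := by
    intro m
    have := congrArg (pairing (φ m)) hceq'
    rw [map_sum] at this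
    simpa using this
  rcases I.eq_empty_or_nonempty with hI | hI
  · subst hI
    have hzero : ∀ m, φ m d = 0 := by
      intro m
      have := hreal m
      simp only [Finset.sum_empty] at this
      exact_mod_cast this
    obtain ⟨t, ht, htd⟩ := hφ d hzero
    exact ⟨t, fun _ => 1, ht, fun i hi => le_refl _, by simp [htd]⟩
  · set A : Fin r → Fin n → ℚ := fun m i => ((φ m (w i) : ℤ) : ℚ) with hA
    set β : Fin r → ℚ := fun m => ((φ m d : ℤ) : ℚ) with hβ
    have hsys : ∀ m, ∑ i ∈ I, (A m i : ℝ) * c i = (β m : ℝ) := by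
      intro m
      rw [hA, hβ]
      push_cast
      rw [hreal m]
      exact Finset.sum_congr rfl fun i _ => mul_comm _ _
    obtain ⟨i₀, hi₀, hmin⟩ := Finset.exists_mem_eq_inf' hI c
    set ε : ℝ := I.inf' hI c with hεdef
    have hε : 0 < ε := hmin ▸ hcpos i₀ hi₀
    obtain ⟨q, hq, happ⟩ := ratApprox r I A β c hsys ε hε
    have hqpos : ∀ i ∈ I, 0 < q i := by
      intro i hi
      have h1 := happ i hi
      have h2 : ε ≤ c i := Finset.inf'_le c hi
      rw [abs_sub_lt_iff] at h1
      have : (0 : ℝ) < (q i : ℝ) := by linarith [h1.2]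
      exact_mod_cast this
    set M : ℕ := ∏ i ∈ I, (q i).den with hM
    have hMpos : 0 < M := Finset.prod_pos fun i _ => (q i).pos
    set z : Fin n → ℤ := fun i => (q i * M).num with hz
    have hzval : ∀ i ∈ I, ((z i : ℚ)) = q i * M := by
      intro i hi
      obtain ⟨e, he⟩ := Finset.dvd_prod_of_mem (fun i => (q i).den) hi
      have hMeq : (M : ℚ) = ((q i).den : ℚ) * (e : ℚ) := by
        have h0 : M = (q i).den * e := he
        rw [h0]
        push_cast
        ring
      have h1 : q i * (M : ℚ) = (((q i).num * (e : ℤ) : ℤ) : ℚ) := by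
        rw [hMeq, ← mul_assoc, Rat.mul_den_eq_num]
        norm_cast
      have h2 : z i = (q i).num * (e : ℤ) := by
        show (q i * (M : ℚ)).num = _
        rw [h1, Rat.num_intCast]
      rw [h2]
      exact_mod_cast h1.symm
    have hzpos : ∀ i ∈ I, 1 ≤ z i := by
      intro i hi
      have h1 : (0 : ℚ) < (z i : ℚ) := by
        rw [hzval i hi]
        exact mul_pos (hqpos i hi) (by exact_mod_cast hMpos)
      have : (0 : ℤ) < z i := by exact_mod_cast h1
      omega
    have hker : ∀ m, φ m (∑ i ∈ I, z i • w i - (M : ℤ) • d) = 0 := by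
      intro m
      have h1 := hq m
      have h2 : ∑ i ∈ I, (z i : ℚ) * ((φ m (w i) : ℤ) : ℚ)
          = (M : ℚ) * ((φ m d : ℤ) : ℚ) := by
        calc ∑ i ∈ I, (z i : ℚ) * ((φ m (w i) : ℤ) : ℚ)
            = ∑ i ∈ I, (q i * M) * A m i := by
              refine Finset.sum_congr rfl fun i hi => ?_
              rw [hzval i hi, hA]
          _ = (M : ℚ) * ∑ i ∈ I, A m i * q i := by
              rw [Finset.mul_sum]
              exact Finset.sum_congr rfl fun i _ => by ring
          _ = (M : ℚ) * ((φ m d : ℤ) : ℚ) := by rw [h1, hβ]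
      have h3 : ∑ i ∈ I, z i * φ m (w i) = (M : ℤ) * φ m d := by
        exact_mod_cast h2
      rw [map_sub, map_sum]
      simp only [map_smul, smul_eq_mul]
      rw [h3]
      push_cast
      ring
    obtain ⟨t, ht, htx⟩ := hφ _ hker
    refine ⟨t * M, fun i => ((t : ℤ) * z i).toNat, Nat.mul_pos ht hMpos, ?_, ?_⟩
    · intro i hi
      have h1 : (1 : ℤ) ≤ (t : ℤ) * z i := by
        have h2 := hzpos i hi
        have ht' : (1 : ℤ) ≤ (t : ℤ) := by exact_mod_cast ht
        nlinarith
      have h3 : (1 : ℤ) ≤ (((t : ℤ) * z i).toNat : ℤ) := by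
        rwa [Int.toNat_of_nonneg (by linarith)]
      exact_mod_cast h3
    · have hsub : t • (∑ i ∈ I, z i • w i) = t • ((M : ℤ) • d) := by
        have := htx
        rw [smul_sub, sub_eq_zero] at this
        exact this
      calc ∑ i ∈ I, (((t : ℤ) * z i).toNat) • w i
          = ∑ i ∈ I, ((t : ℤ) * z i) • w i := by
            refine Finset.sum_congr rfl fun i hi => ?_
            have h1 : (0 : ℤ) ≤ (t : ℤ) * z i := by
              have := hzpos i hi; positivity
            rw [← natCast_zsmul, Int.toNat_of_nonneg h1]
        _ = ∑ i ∈ I, t • (z i • w i) := by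
            refine Finset.sum_congr rfl fun i _ => ?_
            rw [mul_smul, natCast_zsmul]
        _ = t • ((M : ℤ) • d) := by rw [← Finset.smul_sum, hsub]
        _ = (t * M) • d := by
            rw [natCast_zsmul, smul_smul]

/-- Let `S = k[T_1,…,T_n]` be `D`-graded via `w`, and let `f = ∏_{i∈I} T_i`,
`g = ∏_{j∈J} T_j` be squarefree monomials. If there are `k, l ≥ 1` and homogeneous
`h₁ ∣ f^k`, `h₂ ∣ g^l` of the same degree `d` lying in the interior of both weight cones
(i.e. `d` is a strictly positive combination of the degrees over `I` and over `J`), then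
`h₁/h₂` makes sense as a degree-zero element of `S_{fg}`, and there are positive integers
`ε_i (i ∈ I)`, `δ_j (j ∈ J)` with `Σ_{i∈I} ε_i deg(T_i) = Σ_{j∈J} δ_j deg(T_j)`. -/
theorem interior_intersection_gives_positive_relation
    {κ D : Type*} [Field κ] [AddCommGroup D] [AddGroup.FG D]
    {n : ℕ} (w : Fin n → D) (I J : Finset (Fin n))
    (f g : MvPolynomial (Fin n) κ)
    (hf : f = ∏ i ∈ I, X i) (hg : g = ∏ j ∈ J, X j)
    (k l : ℕ) (hk : 1 ≤ k) (hl : 1 ≤ l)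
    (h₁ h₂ : MvPolynomial (Fin n) κ) (d : D)
    (hdiv₁ : h₁ ∣ f ^ k) (hdiv₂ : h₂ ∣ g ^ l)
    (hhom₁ : IsWeightedHomogeneous w h₁ d) (hhom₂ : IsWeightedHomogeneous w h₂ d)
    (hintI : ∃ c : Fin n → ℝ, (∀ i ∈ I, 0 < c i) ∧
      toReal D d = ∑ i ∈ I, c i • toReal D (w i))
    (hintJ : ∃ c : Fin n → ℝ, (∀ j ∈ J, 0 < c j) ∧
      toReal D d = ∑ j ∈ J, c j • toReal D (w j)) :
    (∃ x : Localization.Away (f * g),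
      x * algebraMap (MvPolynomial (Fin n) κ) (Localization.Away (f * g)) h₂ =
        algebraMap (MvPolynomial (Fin n) κ) (Localization.Away (f * g)) h₁) ∧
    (∃ ε δ : Fin n → ℕ, (∀ i ∈ I, 1 ≤ ε i) ∧ (∀ j ∈ J, 1 ≤ δ j) ∧
      ∑ i ∈ I, ε i • w i = ∑ j ∈ J, δ j • w j) := by
  constructor
  · -- localization part
    have hdvd : h₂ ∣ (f * g) ^ l := hdiv₂.trans ⟨f ^ l, by rw [mul_pow]; ring⟩
    have hunit : IsUnit (algebraMap (MvPolynomial (Fin n) κ) (Localization.Away (f * g)) (f * g)) :=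
      IsLocalization.Away.algebraMap_isUnit (f * g)
    have hu : IsUnit (algebraMap (MvPolynomial (Fin n) κ) (Localization.Away (f * g)) h₂) := by
      refine isUnit_of_dvd_unit ?_ (hunit.pow l)
      rw [← map_pow]
      exact map_dvd _ hdvd
    refine ⟨algebraMap _ _ h₁ * ↑hu.unit⁻¹, ?_⟩
    rw [mul_assoc, IsUnit.val_inv_mul, mul_one]
  · obtain ⟨N₁, p₁, hN₁, hp₁, he₁⟩ := one_side w I d hintI
    obtain ⟨N₂, p₂, hN₂, hp₂, he₂⟩ := one_side w J d hintJ
    refine ⟨fun i => N₂ * p₁ i, fun j => N₁ * p₂ j, ?_, ?_, ?_⟩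
    · intro i hi
      exact Nat.one_le_iff_ne_zero.mpr (Nat.mul_ne_zero hN₂.ne'
        (Nat.one_le_iff_ne_zero.mp (hp₁ i hi)))
    · intro j hj
      exact Nat.one_le_iff_ne_zero.mpr (Nat.mul_ne_zero hN₁.ne'
        (Nat.one_le_iff_ne_zero.mp (hp₂ j hj)))
    · calc ∑ i ∈ I, (N₂ * p₁ i) • w i = N₂ • ∑ i ∈ I, p₁ i • w i := by
            rw [Finset.smul_sum]
            exact Finset.sum_congr rfl fun i _ => mul_smul _ _ _
        _ = N₂ • (N₁ • d) := by rw [he₁]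
        _ = N₁ • (N₂ • d) := by rw [smul_smul, smul_smul, Nat.mul_comm]
        _ = N₁ • ∑ j ∈ J, p₂ j • w j := by rw [he₂]
        _ = ∑ j ∈ J, (N₁ * p₂ j) • w j := by
            rw [Finset.smul_sum]
            exact Finset.sum_congr rfl fun j _ => (mul_smul _ _ _).symm
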